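/- (Corollary 3.3) Let n ≥ 1 be a natural number, 0 < q < p ≤ 1, 0 < α ≤ 1 and M > 0. Then for every f ∈ W̃_{α,[0,∞)} with constant M (i.e. |f(t) − f(y)| ≤ M·|t/(1+t) − y/(1+y)|^α for all t,y ≥ 0) and every x ≥ 0, | L_n^{p,q}(f;x) − pq·f(x) | ≤ M·δ_n(x)^{α/2}. -/

import Mathlib

open Finset Filter
open scoped Classical

noncomputable section

/-- The `(p,q)`-integer `[n]_{p,q} = (p^n - q^n)/(p - q)`. -/
def pqInt (p q : ℝ) (n : ℕ) : ℝ := (p ^ n - q ^ n) / (p - q)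

/-- The `(p,q)`-factorial. -/
def pqFact (p q : ℝ) : ℕ → ℝ
  | 0 => 1
  | n + 1 => pqFact p q n * pqInt p q (n + 1)

/-- The `(p,q)`-binomial coefficient. -/
def pqBinom (p q : ℝ) (n k : ℕ) : ℝ :=
  pqFact p q n / (pqFact p q k * pqFact p q (n - k))

/-- `ℓ_n^{p,q}(x) = ∏_{s=0}^{n-1} (p^s + q^s x)`. -/
def pqEll (p q : ℝ) (n : ℕ) (x : ℝ) : ℝ :=
  ∏ s ∈ Finset.range n, (p ^ s + q ^ s * x)

/-- The node `p^{n-k+1}[k]_{p,q} / ([n-k+1]_{p,q} q^k)`. -/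
def pqNode (p q : ℝ) (n k : ℕ) : ℝ :=
  p ^ (n - k + 1) * pqInt p q k / (pqInt p q (n - k + 1) * q ^ k)

/-- The `(p,q)`-Bleimann–Butzer–Hahn operator. -/
def bbh (p q : ℝ) (n : ℕ) (f : ℝ → ℝ) (x : ℝ) : ℝ :=
  (p * q / pqEll p q n x) *
    ∑ k ∈ Finset.range (n + 1),
      f (pqNode p q n k) * p ^ ((n - k) * (n - k - 1) / 2) *
        q ^ (k * (k - 1) / 2) * pqBinom p q n k * x ^ k

/-- `δ_n(x)` from Theorem 3.1. -/
def pqDelta (p q : ℝ) (n : ℕ) (x : ℝ) : ℝ :=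
  (x / (1 + x)) ^ 2 *
      (p ^ 2 * q ^ 3 * pqInt p q n * pqInt p q (n - 1) / (pqInt p q (n + 1)) ^ 2 *
          ((1 + x) / (p + q * x)) -
        2 * p * q * pqInt p q n / pqInt p q (n + 1) + 1) +
    p ^ (n + 2) * q * pqInt p q n / (pqInt p q (n + 1)) ^ 2 * (x / (1 + x))

/-- Statistical convergence of a real sequence. -/
def StatConv (a : ℕ → ℝ) (l : ℝ) : Prop :=
  ∀ ε > (0 : ℝ), Tendsto (fun n : ℕ =>
    (((Finset.range (n + 1)).filter (fun k => ε ≤ |a k - l|)).card : ℝ) / n)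
    atTop (nhds 0)

/-- A modulus of continuity. -/
def IsModulus (ω : ℝ → ℝ) : Prop :=
  (∀ δ, 0 ≤ δ → 0 ≤ ω δ) ∧
  (∀ δ₁ δ₂, 0 ≤ δ₁ → δ₁ ≤ δ₂ → ω δ₁ ≤ ω δ₂) ∧
  (∀ δ₁ δ₂, 0 ≤ δ₁ → 0 ≤ δ₂ → ω (δ₁ + δ₂) ≤ ω δ₁ + ω δ₂) ∧
  Tendsto ω (nhdsWithin 0 (Set.Ioi 0)) (nhds 0)

/-- Membership in the class `H_ω`. -/
def MemHomega (ω f : ℝ → ℝ) : Prop :=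
  ∀ x y : ℝ, 0 ≤ x → 0 ≤ y → |f x - f y| ≤ ω |x / (1 + x) - y / (1 + y)|

/-- The modulus `ω̃(f; δ)`. -/
def omegaTilde (f : ℝ → ℝ) (δ : ℝ) : ℝ :=
  sSup {d | ∃ t x : ℝ, 0 ≤ t ∧ 0 ≤ x ∧ |t / (1 + t) - x / (1 + x)| ≤ δ ∧ d = |f t - f x|}

/-- The bivariate `(p,q)`-Bleimann–Butzer–Hahn operator. -/
def bbh2 (p₁ p₂ q₁ q₂ : ℝ) (n₁ n₂ : ℕ) (f : ℝ → ℝ → ℝ) (x y : ℝ) : ℝ :=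
  (p₁ * p₂ * q₁ * q₂ / (pqEll p₁ q₁ n₁ x * pqEll p₂ q₂ n₂ y)) *
    ∑ k₁ ∈ Finset.range (n₁ + 1), ∑ k₂ ∈ Finset.range (n₂ + 1),
      f (pqNode p₁ q₁ n₁ k₁) (pqNode p₂ q₂ n₂ k₂) *
        p₁ ^ ((n₁ - k₁) * (n₁ - k₁ - 1) / 2) * q₁ ^ (k₁ * (k₁ - 1) / 2) *
        p₂ ^ ((n₂ - k₂) * (n₂ - k₂ - 1) / 2) * q₂ ^ (k₂ * (k₂ - 1) / 2) *
        pqBinom p₁ q₁ n₁ k₁ * pqBinom p₂ q₂ n₂ k₂ * x ^ k₁ * y ^ k₂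

/-- Statistical convergence of a double real sequence (Pringsheim sense). -/
def StatConv2 (a : ℕ → ℕ → ℝ) (l : ℝ) : Prop :=
  ∀ ε > (0 : ℝ), Tendsto (fun N : ℕ × ℕ =>
    ((((Finset.range (N.1 + 1)) ×ˢ (Finset.range (N.2 + 1))).filter
        (fun jk => ε ≤ |a jk.1 jk.2 - l|)).card : ℝ) / (N.1 * N.2))
    atTop (nhds 0)

/-- A bivariate modulus of continuity. -/
def IsModulus2 (ω : ℝ → ℝ → ℝ) : Prop :=
  (∀ a b, 0 ≤ a → 0 ≤ b → 0 ≤ ω a b) ∧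
  (∀ a a' b, 0 ≤ a → a ≤ a' → 0 ≤ b → ω a b ≤ ω a' b) ∧
  (∀ a b b', 0 ≤ a → 0 ≤ b → b ≤ b' → ω a b ≤ ω a b') ∧
  (∀ a a' b, 0 ≤ a → 0 ≤ a' → 0 ≤ b → ω (a + a') b ≤ ω a b + ω a' b) ∧
  (∀ a b b', 0 ≤ a → 0 ≤ b → 0 ≤ b' → ω a (b + b') ≤ ω a b + ω a b') ∧
  Tendsto (fun d : ℝ × ℝ => ω d.1 d.2)
    (nhdsWithin (0, 0) (Set.Ioi 0 ×ˢ Set.Ioi 0)) (nhds 0)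

/-- Membership in the class `H_{ω₂}`. -/
def MemHomega2 (ω g : ℝ → ℝ → ℝ) : Prop :=
  ∀ u₁ v₁ u₂ v₂ : ℝ, 0 ≤ u₁ → 0 ≤ v₁ → 0 ≤ u₂ → 0 ≤ v₂ →
    |g u₁ v₁ - g u₂ v₂| ≤
      ω |u₁ / (1 + u₁) - u₂ / (1 + u₂)| |v₁ / (1 + v₁) - v₂ / (1 + v₂)|

/-- The bivariate modulus `ω̃(g; δ₁, δ₂)`. -/
def omegaTilde2 (g : ℝ → ℝ → ℝ) (δ₁ δ₂ : ℝ) : ℝ :=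
  sSup {d | ∃ t s x y : ℝ, 0 ≤ t ∧ 0 ≤ s ∧ 0 ≤ x ∧ 0 ≤ y ∧
    |t / (1 + t) - x / (1 + x)| ≤ δ₁ ∧ |s / (1 + s) - y / (1 + y)| ≤ δ₂ ∧
    d = |g t s - g x y|}

namespace PQAux

def T (k : ℕ) : ℕ := ∑ i ∈ Finset.range k, i

lemma T_eq (k : ℕ) : T k = k * (k - 1) / 2 := by
  have h := Finset.sum_range_id_mul_two k
  unfold T
  set m := k * (k - 1) with hm
  omega

lemma T_succ (k : ℕ) : T (k + 1) = T k + k := Finset.sum_range_succ _ _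

variable {p q : ℝ} (hq : 0 < q) (hqp : q < p)

section
include hq hqp

lemma p_pos : 0 < p := lt_trans hq hqp

lemma pqInt_nonneg (n : ℕ) : 0 ≤ pqInt p q n :=
  div_nonneg (sub_nonneg.2 (pow_le_pow_left₀ hq.le hqp.le n)) (sub_pos.2 hqp).le

lemma pqInt_pos {n : ℕ} (hn : 1 ≤ n) : 0 < pqInt p q n :=
  div_pos (sub_pos.2 (pow_lt_pow_left₀ hqp hq.le (by omega))) (sub_pos.2 hqp)

lemma pqInt_zero : pqInt p q 0 = 0 := by simp [pqInt]

lemma pqInt_add (a b : ℕ) :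
    pqInt p q (a + b) = q ^ b * pqInt p q a + p ^ a * pqInt p q b := by
  have h : p - q ≠ 0 := sub_ne_zero.2 (ne_of_gt hqp)
  unfold pqInt
  field_simp
  rw [pow_add, pow_add]
  ring

lemma pqFact_pos (n : ℕ) : 0 < pqFact p q n := by
  induction n with
  | zero => norm_num [pqFact]
  | succ n ih => exact mul_pos ih (pqInt_pos hq hqp (by omega))

lemma pqFact_ne (n : ℕ) : pqFact p q n ≠ 0 := ne_of_gt (pqFact_pos hq hqp n)

lemma pqBinom_pos (n k : ℕ) : 0 < pqBinom p q n k :=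
  div_pos (pqFact_pos hq hqp n) (mul_pos (pqFact_pos hq hqp k) (pqFact_pos hq hqp _))

lemma pqBinom_zero (n : ℕ) : pqBinom p q n 0 = 1 := by
  simp only [pqBinom, pqFact, Nat.sub_zero, one_mul]
  field_simp [pqFact_ne hq hqp n]

lemma pqBinom_self (n : ℕ) : pqBinom p q n n = 1 := by
  unfold pqBinom
  rw [Nat.sub_self]
  field_simp [pqFact_ne hq hqp n, pqFact]
  simp [pqFact]

lemma pascal (i k : ℕ) :
    pqBinom p q (i + k + 2) (i + 1)
      = q ^ (i + 1) * pqBinom p q (i + k + 1) (i + 1)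
        + p ^ (k + 1) * pqBinom p q (i + k + 1) i := by
  have h1 : pqInt p q (i + k + 2)
      = q ^ (i + 1) * pqInt p q (k + 1) + p ^ (k + 1) * pqInt p q (i + 1) := by
    have h := pqInt_add hq hqp (k + 1) (i + 1)
    rw [show k + 1 + (i + 1) = i + k + 2 by ring] at h
    linarith [h]
  unfold pqBinom
  rw [show i + k + 2 - (i + 1) = k + 1 from by omega,
      show i + k + 1 - (i + 1) = k from by omega,
      show i + k + 1 - i = k + 1 from by omega,
      show pqFact p q (i + k + 2) = pqFact p q (i + k + 1) * pqInt p q (i + k + 2) from rfl,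
      show pqFact p q (k + 1) = pqFact p q k * pqInt p q (k + 1) from rfl,
      show pqFact p q (i + 1) = pqFact p q i * pqInt p q (i + 1) from rfl, h1]
  have n1 := pqFact_ne hq hqp (i + k + 1)
  have n2 := pqFact_ne hq hqp k
  have n3 := pqFact_ne hq hqp i
  have n4 : pqInt p q (k + 1) ≠ 0 := ne_of_gt (pqInt_pos hq hqp (by omega))
  have n5 : pqInt p q (i + 1) ≠ 0 := ne_of_gt (pqInt_pos hq hqp (by omega))
  field_simp

lemma binom_shift1 (j k : ℕ) :
    pqBinom p q (j + k + 1) (j + 1) * pqInt p q (j + 1)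
      = pqInt p q (j + k + 1) * pqBinom p q (j + k) j := by
  unfold pqBinom
  rw [show j + k + 1 - (j + 1) = k from by omega,
      show j + k - j = k from by omega,
      show pqFact p q (j + k + 1) = pqFact p q (j + k) * pqInt p q (j + k + 1) from rfl,
      show pqFact p q (j + 1) = pqFact p q j * pqInt p q (j + 1) from rfl]
  have n1 := pqFact_ne hq hqp (j + k)
  have n2 := pqFact_ne hq hqp k
  have n3 := pqFact_ne hq hqp j
  have n5 : pqInt p q (j + 1) ≠ 0 := ne_of_gt (pqInt_pos hq hqp (by omega))
  field_simp

lemma binom_shift2 (j k : ℕ) :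
    pqBinom p q (j + k + 2) (j + 2) * (pqInt p q (j + 2) * pqInt p q (j + 1))
      = pqInt p q (j + k + 2) * pqInt p q (j + k + 1) * pqBinom p q (j + k) j := by
  unfold pqBinom
  rw [show j + k + 2 - (j + 2) = k from by omega,
      show j + k - j = k from by omega,
      show pqFact p q (j + k + 2) = pqFact p q (j + k + 1) * pqInt p q (j + k + 2) from rfl,
      show pqFact p q (j + k + 1) = pqFact p q (j + k) * pqInt p q (j + k + 1) from rfl,
      show pqFact p q (j + 2) = pqFact p q (j + 1) * pqInt p q (j + 2) from rfl,
      show pqFact p q (j + 1) = pqFact p q j * pqInt p q (j + 1) from rfl]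
  have n1 := pqFact_ne hq hqp (j + k)
  have n2 := pqFact_ne hq hqp k
  have n3 := pqFact_ne hq hqp j
  have n4 : pqInt p q (j + 2) ≠ 0 := ne_of_gt (pqInt_pos hq hqp (by omega))
  have n5 : pqInt p q (j + 1) ≠ 0 := ne_of_gt (pqInt_pos hq hqp (by omega))
  field_simp


lemma gauss (m : ℕ) : ∀ a b : ℝ,
    ∑ j ∈ Finset.range (m + 1),
        p ^ T (m - j) * q ^ T j * pqBinom p q m j * a ^ (m - j) * b ^ j
      = ∏ s ∈ Finset.range m, (p ^ s * a + q ^ s * b) := by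
  induction m with
  | zero =>
      intro a b
      simp [pqBinom, pqFact, T]
  | succ m ih =>
      intro a b
      have key : ∏ s ∈ Finset.range (m + 1), (p ^ s * a + q ^ s * b)
          = (a + b) * ∏ s ∈ Finset.range m, (p ^ s * (p * a) + q ^ s * (q * b)) := by
        rw [Finset.prod_range_succ']
        have : ∀ s ∈ Finset.range m,
            p ^ (s + 1) * a + q ^ (s + 1) * b = p ^ s * (p * a) + q ^ s * (q * b) := by
          intro s _; ring
        rw [Finset.prod_congr rfl this]
        simp [mul_comm]
      rw [key, ← ih (p * a) (q * b)]
      set g : ℕ → ℝ := fun j =>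
        p ^ T (m - j) * q ^ T j * pqBinom p q m j * (p * a) ^ (m - j) * (q * b) ^ j with hg
      set F : ℕ → ℝ := fun j =>
        p ^ T (m + 1 - j) * q ^ T j * pqBinom p q (m + 1) j * a ^ (m + 1 - j) * b ^ j with hF
      have hL : ∑ j ∈ Finset.range (m + 1 + 1), F j
          = ∑ j ∈ Finset.range m, F (j + 1) + F 0 + F (m + 1) := by
        rw [Finset.sum_range_succ, Finset.sum_range_succ']
      have hR : (a + b) * ∑ j ∈ Finset.range (m + 1), g j
          = ∑ j ∈ Finset.range m, (a * g (j + 1) + b * g j) + (a * g 0 + b * g m) := by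
        rw [Finset.sum_add_distrib, add_mul, Finset.mul_sum, Finset.mul_sum,
          Finset.sum_range_succ' (fun j => a * g j) m,
          Finset.sum_range_succ (fun j => b * g j) m]
        ring
      rw [hL, hR]
      have hF0 : F 0 = a * g 0 := by
        have hT0 : T 0 = 0 := by simp [T]
        simp only [hF, hg, Nat.sub_zero, pqBinom_zero hq hqp, T_succ, pow_zero, hT0]
        ring
      have hFm : F (m + 1) = b * g m := by
        simp only [hF, hg, Nat.sub_self, Nat.add_sub_cancel,
          pqBinom_self hq hqp, T_succ, pow_zero]
        have hT0 : T 0 = 0 := by simp [T]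
        simp only [hT0, pow_zero]
        ring
      have hstep : ∀ j ∈ Finset.range m, F (j + 1) = a * g (j + 1) + b * g j := by
        intro j hj
        rw [Finset.mem_range] at hj
        obtain ⟨k, rfl⟩ : ∃ k, m = j + k + 1 := ⟨m - j - 1, by omega⟩
        simp only [hF, hg,
          show j + k + 1 + 1 - (j + 1) = k + 1 from by omega,
          show j + k + 1 - (j + 1) = k from by omega,
          show j + k + 1 - j = k + 1 from by omega,
          show j + k + 1 + 1 = j + k + 2 from by omega]
        rw [pascal hq hqp j k, T_succ k, T_succ j]
        ring
      rw [Finset.sum_congr rfl hstep, hF0, hFm]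
      ring


lemma pqInt_one : pqInt p q 1 = 1 := by
  unfold pqInt
  rw [pow_one, pow_one]
  exact div_self (sub_ne_zero.2 (ne_of_gt hqp))

lemma pqInt_sq (j : ℕ) :
    pqInt p q (j + 1) ^ 2
      = p ^ j * pqInt p q (j + 1) + q * pqInt p q (j + 1) * pqInt p q j := by
  have h := pqInt_add hq hqp j 1
  rw [pow_one, pqInt_one hq hqp, mul_one] at h
  linear_combination (pqInt p q (j + 1)) * h

lemma M0 (n : ℕ) (x : ℝ) :
    ∑ k ∈ Finset.range (n + 1),
        p ^ T (n - k) * q ^ T k * pqBinom p q n k * x ^ k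
      = ∏ s ∈ Finset.range n, (p ^ s + q ^ s * x) := by
  have h := gauss hq hqp n 1 x
  simpa using h

lemma M1 (m : ℕ) (x : ℝ) :
    ∑ k ∈ Finset.range (m + 2),
        p ^ T (m + 1 - k) * q ^ T k * pqBinom p q (m + 1) k * x ^ k *
          (p ^ (m + 1 - k + 1) * pqInt p q k)
      = pqInt p q (m + 1) * p * x *
          ∏ s ∈ Finset.range m, (p ^ s * p + q ^ s * (q * x)) := by
  rw [Finset.sum_range_succ']
  simp only [pqInt_zero hq hqp, mul_zero, add_zero]
  rw [← gauss hq hqp m p (q * x), Finset.mul_sum]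
  apply Finset.sum_congr rfl
  intro j hj
  rw [Finset.mem_range] at hj
  obtain ⟨k, rfl⟩ : ∃ k, m = j + k := ⟨m - j, by omega⟩
  simp only [show j + k + 1 - (j + 1) = k from by omega,
    show j + k - j = k from by omega]
  rw [show T (j + 1) = T j + j from T_succ j]
  linear_combination (p ^ T k * q ^ (T j + j) * x ^ (j + 1) * p ^ (k + 1)) *
    binom_shift1 hq hqp j k

lemma M2 (m : ℕ) (x : ℝ) :
    ∑ k ∈ Finset.range (m + 2),
        p ^ T (m + 1 - k) * q ^ T k * pqBinom p q (m + 1) k * x ^ k *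
          (p ^ (m + 1 - k + 1) * pqInt p q k) ^ 2
      = pqInt p q (m + 1) * p ^ (m + 2) * x *
          ∏ s ∈ Finset.range m, (p ^ s * p + q ^ s * (q * x))
        + pqInt p q (m + 1) * pqInt p q m * p ^ 2 * q ^ 2 * x ^ 2 *
            ∏ s ∈ Finset.range (m - 1), (p ^ s * p ^ 2 + q ^ s * (q ^ 2 * x)) := by
  rw [Finset.sum_range_succ']
  simp only [pqInt_zero hq hqp, mul_zero, zero_pow, add_zero, ne_eq, OfNat.ofNat_ne_zero,
    not_false_eq_true, mul_zero]
  have hsplit : ∀ j ∈ Finset.range (m + 1),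
      p ^ T (m + 1 - (j + 1)) * q ^ T (j + 1) * pqBinom p q (m + 1) (j + 1) * x ^ (j + 1) *
          (p ^ (m + 1 - (j + 1) + 1) * pqInt p q (j + 1)) ^ 2
        = (p ^ T (m + 1 - (j + 1)) * q ^ T (j + 1) * pqBinom p q (m + 1) (j + 1) * x ^ (j + 1) *
            (p ^ (m + 1 - (j + 1) + 1)) ^ 2 * p ^ j * pqInt p q (j + 1))
          + (p ^ T (m + 1 - (j + 1)) * q ^ T (j + 1) * pqBinom p q (m + 1) (j + 1) * x ^ (j + 1) *
            (p ^ (m + 1 - (j + 1) + 1)) ^ 2 * q * pqInt p q (j + 1) * pqInt p q j) := by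
    intro j hj
    rw [mul_pow]
    linear_combination (p ^ T (m + 1 - (j + 1)) * q ^ T (j + 1) * pqBinom p q (m + 1) (j + 1) *
      x ^ (j + 1) * (p ^ (m + 1 - (j + 1) + 1)) ^ 2) * pqInt_sq hq hqp j
  rw [Finset.sum_congr rfl hsplit, Finset.sum_add_distrib]
  congr 1
  · -- B part
    rw [← gauss hq hqp m p (q * x), Finset.mul_sum]
    apply Finset.sum_congr rfl
    intro j hj
    rw [Finset.mem_range] at hj
    obtain ⟨k, rfl⟩ : ∃ k, m = j + k := ⟨m - j, by omega⟩
    simp only [show j + k + 1 - (j + 1) = k from by omega,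
      show j + k - j = k from by omega]
    rw [show T (j + 1) = T j + j from T_succ j]
    linear_combination (p ^ T k * q ^ (T j + j) * x ^ (j + 1) * (p ^ (k + 1)) ^ 2 * p ^ j) *
      binom_shift1 hq hqp j k
  · -- A part
    rcases m with _ | r
    · simp [pqInt_zero hq hqp]
    · rw [Finset.sum_range_succ']
      simp only [pqInt_zero hq hqp, mul_zero, add_zero]
      rw [show r + 1 - 1 = r from by omega,
        ← gauss hq hqp r (p ^ 2) (q ^ 2 * x), Finset.mul_sum]
      apply Finset.sum_congr rfl
      intro i hi
      rw [Finset.mem_range] at hi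
      obtain ⟨k, rfl⟩ : ∃ k, r = i + k := ⟨r - i, by omega⟩
      simp only [show i + k + 1 + 1 - (i + 1 + 1) = k from by omega,
        show i + k + 1 - i = k + 1 from by omega,
        show i + k - i = k from by omega,
        show i + k + 1 + 1 = i + k + 2 from by omega,
        show i + 1 + 1 = i + 2 from by omega]
      rw [show T (i + 2) = T i + (2 * i + 1) from by rw [T_succ, T_succ]; omega]
      linear_combination (p ^ T k * q ^ (T i + (2 * i + 1)) * x ^ (i + 2) * (p ^ (k + 1)) ^ 2 * q) *
        binom_shift2 hq hqp i k

end
end PQAux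

lemma pq_core_ineq (p q b c : ℝ) (hq : 0 < q) (hqp : q < p) (hp : p ≤ 1)
    (hb : 0 ≤ b) (hc : 0 ≤ c) (hpb : p * b ≤ 1) :
    p ^ 3 * q ^ 3 * c - 2 * p ^ 2 * q * b + p * q
      ≤ p ^ 2 * q ^ 3 * c - 2 * p * q * b + 1 := by
  nlinarith [mul_nonneg (mul_nonneg (sub_nonneg.2 hp)
      (by positivity : (0:ℝ) ≤ p ^ 2 * q ^ 3)) hc,
    mul_nonneg hq.le (mul_nonneg (sub_nonneg.2 hp) (by linarith : (0:ℝ) ≤ 1 - p * b)),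
    sq_nonneg (1 - q), mul_pos (sub_pos.2 hqp) hq]

open PQAux

/-- Corollary 3.3, Lipschitz-type estimate for `E = [0,∞)`. -/
theorem bbh_lipschitz_estimate_Ici (n : ℕ) (hn : 1 ≤ n) (p q : ℝ)
    (hq : 0 < q) (hqp : q < p) (hp : p ≤ 1)
    (α : ℝ) (hα0 : 0 < α) (hα1 : α ≤ 1) (M : ℝ) (hM : 0 < M)
    (f : ℝ → ℝ)
    (hfb : ∃ C : ℝ, ∀ t : ℝ, 0 ≤ t → |f t| ≤ C)
    (hfc : ContinuousOn f (Set.Ici 0))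
    (hf : ∀ t : ℝ, 0 ≤ t → ∀ y : ℝ, 0 ≤ y →
      |f t - f y| ≤ M * |t / (1 + t) - y / (1 + y)| ^ α)
    (x : ℝ) (hx : 0 ≤ x) :
    |bbh p q n f x - p * q * f x| ≤ M * pqDelta p q n x ^ (α / 2) := by
  obtain ⟨m, rfl⟩ : ∃ m, n = m + 1 := ⟨n - 1, by omega⟩
  have hp0 : 0 < p := lt_trans hq hqp
  have hx1 : (0:ℝ) < 1 + x := by linarith
  set ℓ : ℝ := pqEll p q (m + 1) x with hℓdef
  have hℓ0 : 0 < ℓ := by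
    refine Finset.prod_pos fun s _ => ?_
    exact add_pos_of_pos_of_nonneg (pow_pos hp0 s) (mul_nonneg (pow_pos hq s).le hx)
  have hℓne : ℓ ≠ 0 := ne_of_gt hℓ0
  set P₁ : ℝ := ∏ s ∈ Finset.range m, (p ^ s * p + q ^ s * (q * x)) with hP1def
  set P₂ : ℝ := ∏ s ∈ Finset.range (m - 1), (p ^ s * p ^ 2 + q ^ s * (q ^ 2 * x)) with hP2def
  have hP1 : 0 < P₁ := by
    refine Finset.prod_pos fun s _ => ?_
    exact add_pos_of_pos_of_nonneg (mul_pos (pow_pos hp0 s) hp0)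
      (mul_nonneg (pow_pos hq s).le (mul_nonneg hq.le hx))
  have hP2 : 0 < P₂ := by
    refine Finset.prod_pos fun s _ => ?_
    exact add_pos_of_pos_of_nonneg (mul_pos (pow_pos hp0 s) (pow_pos hp0 2))
      (mul_nonneg (pow_pos hq s).le (mul_nonneg (pow_pos hq 2).le hx))
  have hEll : ℓ = (1 + x) * P₁ := by
    rw [hℓdef, hP1def, pqEll, Finset.prod_range_succ']
    rw [Finset.prod_congr rfl (fun s _ => by ring :
      ∀ s ∈ Finset.range m, p ^ (s+1) + q ^ (s+1) * x = p ^ s * p + q ^ s * (q * x))]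
    ring
  set N : ℝ := pqInt p q (m + 1) with hNdef
  set N' : ℝ := pqInt p q m with hN'def
  set D : ℝ := pqInt p q (m + 2) with hDdef
  have hN0 : 0 < N := pqInt_pos hq hqp (by omega)
  have hN'0 : 0 ≤ N' := pqInt_nonneg hq hqp m
  have hD0 : 0 < D := pqInt_pos hq hqp (by omega)
  have hDne : D ≠ 0 := ne_of_gt hD0
  have hpN : p * N ≤ D := by
    have h := pqInt_add hq hqp 1 (m + 1)
    rw [show 1 + (m + 1) = m + 2 from by omega, pqInt_one hq hqp] at h
    have h2 : (0:ℝ) ≤ q ^ (m + 1) := (pow_pos hq _).le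
    rw [hDdef, h, pow_one]
    nlinarith [h2]
  set u : ℕ → ℝ := fun k => p ^ (m + 1 - k + 1) * pqInt p q k / D with hudef
  set μ : ℕ → ℝ := fun k =>
    p * q / ℓ * (p ^ T (m + 1 - k) * q ^ T k * pqBinom p q (m + 1) k * x ^ k) with hμdef
  have hμ0 : ∀ k, 0 ≤ μ k := by
    intro k
    refine mul_nonneg (div_nonneg (mul_pos hp0 hq).le hℓ0.le) ?_
    exact mul_nonneg (mul_nonneg (mul_nonneg (pow_pos hp0 _).le (pow_pos hq _).le)
      (pqBinom_pos hq hqp _ _).le) (pow_nonneg hx k)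
  have hsum0 : ∑ k ∈ Finset.range (m + 2),
      p ^ T (m + 1 - k) * q ^ T k * pqBinom p q (m + 1) k * x ^ k = ℓ :=
    M0 hq hqp (m + 1) x
  have hnodepos : ∀ k, 0 ≤ pqNode p q (m + 1) k := by
    intro k
    exact div_nonneg (mul_nonneg (pow_pos hp0 _).le (pqInt_nonneg hq hqp k))
      (mul_nonneg (pqInt_nonneg hq hqp _) (pow_pos hq k).le)
  have hnode : ∀ k, k < m + 2 →
      pqNode p q (m + 1) k / (1 + pqNode p q (m + 1) k) = u k := by
    intro k hk
    have hA : 0 ≤ p ^ (m + 1 - k + 1) * pqInt p q k :=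
      mul_nonneg (pow_pos hp0 _).le (pqInt_nonneg hq hqp k)
    have hB : 0 < pqInt p q (m + 1 - k + 1) * q ^ k :=
      mul_pos (pqInt_pos hq hqp (by omega)) (pow_pos hq k)
    have hsum : pqInt p q (m + 1 - k + 1) * q ^ k
        + p ^ (m + 1 - k + 1) * pqInt p q k = D := by
      have h := pqInt_add hq hqp (m + 1 - k + 1) k
      rw [show m + 1 - k + 1 + k = m + 2 from by omega] at h
      rw [hDdef]
      linear_combination -h
    rw [pqNode, hudef]
    rw [← hsum]
    have hBA : 0 < pqInt p q (m + 1 - k + 1) * q ^ k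
        + p ^ (m + 1 - k + 1) * pqInt p q k := by linarith
    rw [one_add_div hB.ne', div_div_div_cancel_right₀ hB.ne']
  have hdiff : bbh p q (m + 1) f x - p * q * f x
      = ∑ k ∈ Finset.range (m + 2), μ k * (f (pqNode p q (m + 1) k) - f x) := by
    have h1 : ∑ k ∈ Finset.range (m + 2), μ k * (f (pqNode p q (m + 1) k) - f x)
        = p * q / ℓ * (∑ k ∈ Finset.range (m + 2),
            f (pqNode p q (m + 1) k) * p ^ T (m + 1 - k) * q ^ T k *
              pqBinom p q (m + 1) k * x ^ k)
          - p * q / ℓ * (∑ k ∈ Finset.range (m + 2),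
              p ^ T (m + 1 - k) * q ^ T k * pqBinom p q (m + 1) k * x ^ k) * f x := by
      rw [Finset.mul_sum, Finset.mul_sum, Finset.sum_mul, ← Finset.sum_sub_distrib]
      refine Finset.sum_congr rfl fun k _ => ?_
      simp only [hμdef]
      ring
    rw [h1, hsum0, bbh]
    simp only [← T_eq]
    rw [div_mul_cancel₀ _ hℓne]
  have hS0 : ∑ k ∈ Finset.range (m + 2), μ k = p * q := by
    simp only [hμdef]
    rw [← Finset.mul_sum, hsum0, div_mul_cancel₀ _ hℓne]
  have hS1 : ∑ k ∈ Finset.range (m + 2), μ k * u k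
      = p ^ 2 * q * N / D * (x / (1 + x)) := by
    have h1 : ∀ k ∈ Finset.range (m + 2), μ k * u k
        = p * q / (ℓ * D) * (p ^ T (m + 1 - k) * q ^ T k * pqBinom p q (m + 1) k * x ^ k *
            (p ^ (m + 1 - k + 1) * pqInt p q k)) := by
      intro k _
      simp only [hμdef, hudef]
      ring
    rw [Finset.sum_congr rfl h1, ← Finset.mul_sum, M1 hq hqp m x, ← hP1def, ← hNdef, hEll]
    field_simp [hx1.ne', hP1.ne', hDne]
  have hS2 : ∑ k ∈ Finset.range (m + 2), μ k * u k ^ 2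
      = p ^ (m + 3) * q * N / D ^ 2 * (x / (1 + x))
        + p ^ 3 * q ^ 3 * N / D ^ 2 * (N' * (x ^ 2 * P₂ / ((1 + x) * P₁))) := by
    have h1 : ∀ k ∈ Finset.range (m + 2), μ k * u k ^ 2
        = p * q / (ℓ * D ^ 2) * (p ^ T (m + 1 - k) * q ^ T k * pqBinom p q (m + 1) k * x ^ k *
            (p ^ (m + 1 - k + 1) * pqInt p q k) ^ 2) := by
      intro k _
      simp only [hμdef, hudef]
      ring
    rw [Finset.sum_congr rfl h1, ← Finset.mul_sum, M2 hq hqp m x, ← hP1def, ← hP2def,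
      ← hNdef, ← hN'def, hEll]
    field_simp [hx1.ne', hP1.ne', hP2.ne', hDne]
    ring
  have hV : ∑ k ∈ Finset.range (m + 2), μ k * (u k - x / (1 + x)) ^ 2
      = p ^ (m + 3) * q * N / D ^ 2 * (x / (1 + x))
        + p ^ 3 * q ^ 3 * N / D ^ 2 * (N' * (x ^ 2 * P₂ / ((1 + x) * P₁)))
        - 2 * (x / (1 + x)) * (p ^ 2 * q * N / D * (x / (1 + x)))
        + (x / (1 + x)) ^ 2 * (p * q) := by
    have h1 : ∀ k ∈ Finset.range (m + 2), μ k * (u k - x / (1 + x)) ^ 2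
        = μ k * u k ^ 2 - 2 * (x / (1 + x)) * (μ k * u k) + (x / (1 + x)) ^ 2 * μ k := by
      intro k _
      ring
    rw [Finset.sum_congr rfl h1, Finset.sum_add_distrib, Finset.sum_sub_distrib,
      ← Finset.mul_sum, ← Finset.mul_sum, hS0, hS1, hS2]
  have hV0 : 0 ≤ ∑ k ∈ Finset.range (m + 2), μ k * (u k - x / (1 + x)) ^ 2 :=
    Finset.sum_nonneg fun k _ => mul_nonneg (hμ0 k) (sq_nonneg _)
  have hpx : (0:ℝ) < p + q * x := by positivity
  have hRbound : N' * (x ^ 2 * P₂ / ((1 + x) * P₁))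
      = N' * ((x / (1 + x)) ^ 2 * ((1 + x) / (p + q * x))) := by
    rcases m with _ | r
    · simp [hN'def, pqInt_zero hq hqp]
    · have hP1split : P₁ = (p + q * x) * P₂ := by
        rw [hP1def, hP2def, show r + 1 - 1 = r from by omega, Finset.prod_range_succ']
        rw [Finset.prod_congr rfl (fun s _ => by ring :
          ∀ s ∈ Finset.range r, p ^ (s+1) * p + q ^ (s+1) * (q * x)
            = p ^ s * p ^ 2 + q ^ s * (q ^ 2 * x))]
        ring
      rw [hP1split]
      field_simp [hx1.ne', hpx.ne', hP2.ne']
  have hVle : ∑ k ∈ Finset.range (m + 2), μ k * (u k - x / (1 + x)) ^ 2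
      ≤ pqDelta p q (m + 1) x := by
    rw [hV, hRbound]
    have hδ : pqDelta p q (m + 1) x
        = (x / (1 + x)) ^ 2 *
            (p ^ 2 * q ^ 3 * N * N' / D ^ 2 * ((1 + x) / (p + q * x))
              - 2 * p * q * N / D + 1)
          + p ^ (m + 3) * q * N / D ^ 2 * (x / (1 + x)) := by
      rw [pqDelta, show m + 1 - 1 = m from by omega, show m + 1 + 1 = m + 2 from rfl,
        show m + 1 + 2 = m + 3 from rfl, ← hNdef, ← hN'def, ← hDdef]
    rw [hδ]
    have hX0 : 0 ≤ x / (1 + x) := div_nonneg hx hx1.le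
    have hc0 : 0 ≤ N * N' / D ^ 2 * ((1 + x) / (p + q * x)) :=
      mul_nonneg (div_nonneg (mul_nonneg hN0.le hN'0) (sq_nonneg D))
        (div_nonneg hx1.le hpx.le)
    have hb0 : 0 ≤ N / D := div_nonneg hN0.le hD0.le
    have hpb : p * (N / D) ≤ 1 := by
      rw [show p * (N / D) = p * N / D from by ring, div_le_one hD0]
      exact hpN
    have hmul := mul_le_mul_of_nonneg_left
      (pq_core_ineq p q (N / D) (N * N' / D ^ 2 * ((1 + x) / (p + q * x)))
        hq hqp hp hb0 hc0 hpb)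
      (sq_nonneg (x / (1 + x)))
    have e1 : p ^ (m + 3) * q * N / D ^ 2 * (x / (1 + x)) +
          p ^ 3 * q ^ 3 * N / D ^ 2 * (N' * ((x / (1 + x)) ^ 2 * ((1 + x) / (p + q * x)))) -
          2 * (x / (1 + x)) * (p ^ 2 * q * N / D * (x / (1 + x))) +
          (x / (1 + x)) ^ 2 * (p * q)
        = (x / (1 + x)) ^ 2 * (p ^ 3 * q ^ 3 * (N * N' / D ^ 2 * ((1 + x) / (p + q * x)))
            - 2 * p ^ 2 * q * (N / D) + p * q)
          + p ^ (m + 3) * q * N / D ^ 2 * (x / (1 + x)) := by ring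
    have e2 : (x / (1 + x)) ^ 2 * (p ^ 2 * q ^ 3 * N * N' / D ^ 2 * ((1 + x) / (p + q * x))
            - 2 * p * q * N / D + 1) + p ^ (m + 3) * q * N / D ^ 2 * (x / (1 + x))
        = (x / (1 + x)) ^ 2 * (p ^ 2 * q ^ 3 * (N * N' / D ^ 2 * ((1 + x) / (p + q * x)))
            - 2 * p * q * (N / D) + 1)
          + p ^ (m + 3) * q * N / D ^ 2 * (x / (1 + x)) := by ring
    rw [e1, e2]
    exact add_le_add_left hmul _
  -- pointwise Lipschitz bound
  have habs : |bbh p q (m + 1) f x - p * q * f x|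
      ≤ ∑ k ∈ Finset.range (m + 2), μ k * (M * |u k - x / (1 + x)| ^ α) := by
    rw [hdiff]
    refine (Finset.abs_sum_le_sum_abs _ _).trans (Finset.sum_le_sum ?_)
    intro k hk
    rw [abs_mul, abs_of_nonneg (hμ0 k)]
    refine mul_le_mul_of_nonneg_left ?_ (hμ0 k)
    have h := hf (pqNode p q (m + 1) k) (hnodepos k) x hx
    rwa [hnode k (Finset.mem_range.1 hk)] at h
  -- Jensen / power mean step
  have hpq1 : 0 < p * q := mul_pos hp0 hq
  have hpqle : p * q ≤ 1 := by
    have hq1 : q ≤ 1 := hqp.le.trans hp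
    calc p * q ≤ 1 * 1 := mul_le_mul hp hq1 hq.le zero_le_one
      _ = 1 := one_mul 1
  have hwsum : ∑ k ∈ Finset.range (m + 2), μ k / (p * q) = 1 := by
    rw [← Finset.sum_div, hS0, div_self hpq1.ne']
  have hP : (1:ℝ) ≤ 2 / α := by
    rw [le_div_iff₀ hα0]
    linarith
  have H := Real.arith_mean_le_rpow_mean (Finset.range (m + 2))
    (fun k => μ k / (p * q)) (fun k => |u k - x / (1 + x)| ^ α)
    (fun k _ => div_nonneg (hμ0 k) hpq1.le) hwsum
    (fun k _ => Real.rpow_nonneg (abs_nonneg _) α) hP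
  have hzz : ∀ k ∈ Finset.range (m + 2),
      μ k / (p * q) * (|u k - x / (1 + x)| ^ α) ^ ((2:ℝ) / α)
        = μ k / (p * q) * (u k - x / (1 + x)) ^ 2 := by
    intro k _
    congr 1
    rw [← Real.rpow_mul (abs_nonneg _), show α * (2 / α) = (2:ℝ) from by field_simp,
      show ((2:ℝ)) = ((2:ℕ):ℝ) from by norm_num, Real.rpow_natCast, sq_abs]
  rw [Finset.sum_congr rfl hzz, show (1:ℝ) / (2 / α) = α / 2 from one_div_div 2 α] at H
  have e1 : ∑ k ∈ Finset.range (m + 2), μ k * |u k - x / (1 + x)| ^ α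
      = (p * q) * ∑ k ∈ Finset.range (m + 2), μ k / (p * q) * |u k - x / (1 + x)| ^ α := by
    rw [Finset.mul_sum]
    refine Finset.sum_congr rfl fun k _ => ?_
    field_simp
  have e2 : ∑ k ∈ Finset.range (m + 2), μ k / (p * q) * (u k - x / (1 + x)) ^ 2
      = (∑ k ∈ Finset.range (m + 2), μ k * (u k - x / (1 + x)) ^ 2) / (p * q) := by
    rw [Finset.sum_div]
    exact Finset.sum_congr rfl fun k _ => by ring
  rw [e2] at H
  set V : ℝ := ∑ k ∈ Finset.range (m + 2), μ k * (u k - x / (1 + x)) ^ 2 with hVdef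
  have hstep1 : ∑ k ∈ Finset.range (m + 2), μ k * |u k - x / (1 + x)| ^ α
      ≤ (p * q) * ((V / (p * q)) ^ (α / 2)) := by
    rw [e1]
    exact mul_le_mul_of_nonneg_left H hpq1.le
  have hstep2 : (p * q) * ((V / (p * q)) ^ (α / 2)) ≤ V ^ (α / 2) := by
    rw [Real.div_rpow hV0 hpq1.le]
    rw [show (p * q) * (V ^ (α / 2) / (p * q) ^ (α / 2))
        = ((p * q) ^ ((1:ℝ) - α / 2)) * V ^ (α / 2) from by
      rw [Real.rpow_sub hpq1, Real.rpow_one]; ring]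
    calc ((p * q) ^ ((1:ℝ) - α / 2)) * V ^ (α / 2)
        ≤ 1 * V ^ (α / 2) := by
          refine mul_le_mul_of_nonneg_right ?_ (Real.rpow_nonneg hV0 _)
          exact Real.rpow_le_one hpq1.le hpqle (by linarith)
      _ = V ^ (α / 2) := one_mul _
  have hstep3 : V ^ (α / 2) ≤ pqDelta p q (m + 1) x ^ (α / 2) :=
    Real.rpow_le_rpow hV0 hVle (by linarith)
  calc |bbh p q (m + 1) f x - p * q * f x|
      ≤ ∑ k ∈ Finset.range (m + 2), μ k * (M * |u k - x / (1 + x)| ^ α) := habs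
    _ = M * ∑ k ∈ Finset.range (m + 2), μ k * |u k - x / (1 + x)| ^ α := by
        rw [Finset.mul_sum]
        exact Finset.sum_congr rfl fun k _ => by ring
    _ ≤ M * pqDelta p q (m + 1) x ^ (α / 2) := by
        refine mul_le_mul_of_nonneg_left ?_ hM.le
        exact le_trans hstep1 (le_trans hstep2 hstep3)
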